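/- Let Φ be a CNF formula with clauses C_1,…,C_k (k ≥ 1), each clause a finite set of literals involving pairwise distinct variables. If s = x_0, x_1, …, x_{k+1} = t is an irreducible directed path of length k+1 from s to t in G_Φ, then for each 1 ≤ i ≤ k the vertex x_i has the form (i, l_i) with l_i ∈ C_i, and there is an assignment σ making every l_i true; hence Φ is satisfiable. -/
import Mathlib


/-- Vertices of the digraph `G_Φ`: a source `s`, a sink `t`, and a vertex
`node i l` for each literal `l` of each clause `C i`. Literals over the variable
type `V` are pairs in `V × Bool`. -/
inductive Vtx (V : Type*) where
  | s : Vtx V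
  | t : Vtx V
  | node : ℕ → V × Bool → Vtx V

/-- Negation of a literal: `(v, b)¯ = (v, ¬b)`. -/
def negLit {V : Type*} (l : V × Bool) : V × Bool := (l.1, !l.2)

/-- Arc relation of the digraph `G_Φ` for a CNF formula with clauses
`C 1, …, C k`: arcs `(s, (1, l))` for `l ∈ C 1`; arcs `((k, l), t)` for
`l ∈ C k`; arcs `((i, x), (i+1, y))` for `x ∈ C i`, `y ∈ C (i+1)` with
`x ≠ ȳ`; and arcs `((i, x), (j, y))` for `x ∈ C i`, `y ∈ C j` with `j > i + 1`
and `x = ȳ`. -/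
def arc {V : Type*} (k : ℕ) (C : ℕ → Finset (V × Bool)) : Vtx V → Vtx V → Prop
  | Vtx.s, Vtx.node i l => i = 1 ∧ l ∈ C 1
  | Vtx.node i l, Vtx.t => i = k ∧ l ∈ C k
  | Vtx.node i x, Vtx.node j y =>
      1 ≤ i ∧ j ≤ k ∧ x ∈ C i ∧ y ∈ C j ∧
        ((j = i + 1 ∧ x ≠ negLit y) ∨ (i + 1 < j ∧ x = negLit y))
  | _, _ => False

/-- If `s = x 0, x 1, …, x (k+1) = t` is an irreducible directed path of length
`k + 1` from `s` to `t` in `G_Φ`, then for each `1 ≤ i ≤ k` the vertex `x i` has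
the form `(i, l i)` with `l i ∈ C i`, and there is an assignment `σ` making
every `l i` true; hence `Φ` is satisfiable. -/
theorem irreduciblePath_gives_satisfying {V : Type*} (k : ℕ) (hk : 1 ≤ k)
    (C : ℕ → Finset (V × Bool))
    (hdist : ∀ i, 1 ≤ i → i ≤ k → ∀ l ∈ C i, ∀ l' ∈ C i, l.1 = l'.1 → l = l')
    (x : ℕ → Vtx V) (hx0 : x 0 = Vtx.s) (hxend : x (k + 1) = Vtx.t)
    (hirr : ∀ i j, i < j → j ≤ k + 1 → (arc k C (x i) (x j) ↔ j = i + 1)) :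
    ∃ l : ℕ → V × Bool,
      (∀ i, 1 ≤ i → i ≤ k → l i ∈ C i ∧ x i = Vtx.node i (l i)) ∧
      ∃ σ : V → Bool, ∀ i, 1 ≤ i → i ≤ k → σ (l i).1 = (l i).2 := by
  classical
  -- Forward lemma: each x p (1 ≤ p ≤ k) is a node with index ≥ p.
  have key : ∀ p, 1 ≤ p → p ≤ k → ∃ j l, x p = Vtx.node j l ∧ l ∈ C j ∧ p ≤ j := by
    intro p hp
    induction p, hp using Nat.le_induction with
    | base =>
      intro _
      have h1 := (hirr 0 1 one_pos (by omega)).mpr rfl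
      rw [hx0] at h1
      cases hx1 : x 1 with
      | s => rw [hx1] at h1; exact h1.elim
      | t => rw [hx1] at h1; exact h1.elim
      | node i l =>
        rw [hx1] at h1
        obtain ⟨hi, hl⟩ := h1
        subst hi
        exact ⟨1, l, rfl, hl, le_rfl⟩
    | succ p hp ih =>
      intro hpk
      obtain ⟨j, l, hx, hC, hpj⟩ := ih (by omega)
      have harc := (hirr p (p+1) (by omega) (by omega)).mpr rfl
      rw [hx] at harc
      cases hq : x (p+1) with
      | s => rw [hq] at harc; exact harc.elim
      | t =>
        rw [hq] at harc
        have h2 : arc k C (x p) (x (k+1)) := by rw [hx, hxend]; exact harc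
        have := (hirr p (k+1) (by omega) (by omega)).mp h2
        omega
      | node j' l' =>
        rw [hq] at harc
        obtain ⟨h1, h2, h3, h4, h5⟩ := harc
        refine ⟨j', l', rfl, h4, ?_⟩
        rcases h5 with ⟨h5, -⟩ | ⟨h5, -⟩ <;> omega
  -- Nonemptiness of V × Bool
  obtain ⟨j1, l1, -, -, -⟩ := key 1 le_rfl hk
  -- Choice form
  have key' : ∀ p, ∃ j l, 1 ≤ p → p ≤ k → x p = Vtx.node j l ∧ l ∈ C j ∧ p ≤ j := by
    intro p
    by_cases h : 1 ≤ p ∧ p ≤ k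
    · obtain ⟨j, l, h1, h2, h3⟩ := key p h.1 h.2
      exact ⟨j, l, fun _ _ => ⟨h1, h2, h3⟩⟩
    · exact ⟨0, l1, fun h1 h2 => absurd ⟨h1, h2⟩ h⟩
  choose jf lf hf using key'
  -- Backward lemma: index ≤ position.
  have back : ∀ d p, 1 ≤ p → p + d = k → jf p ≤ p := by
    intro d
    induction d with
    | zero =>
      intro p hp hpk
      obtain ⟨hx, hC, -⟩ := hf p hp (by omega)
      have harc := (hirr p (p+1) (by omega) (by omega)).mpr rfl
      have ht : x (p+1) = Vtx.t := by rw [show p + 1 = k + 1 by omega]; exact hxend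
      rw [hx, ht] at harc
      obtain ⟨h5, -⟩ := harc
      omega
    | succ d ih =>
      intro p hp hpk
      have h2 := ih (p+1) (by omega) (by omega)
      obtain ⟨hx, -, -⟩ := hf p hp (by omega)
      obtain ⟨hx', -, -⟩ := hf (p+1) (by omega) (by omega)
      have harc := (hirr p (p+1) (by omega) (by omega)).mpr rfl
      rw [hx, hx'] at harc
      obtain ⟨-, -, -, -, h5⟩ := harc
      rcases h5 with ⟨h5, -⟩ | ⟨h5, -⟩ <;> omega
  have jeq : ∀ p, 1 ≤ p → p ≤ k → jf p = p := by
    intro p h1 h2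
    exact le_antisymm (back (k - p) p h1 (by omega)) (hf p h1 h2).2.2
  have claim1 : ∀ i, 1 ≤ i → i ≤ k → lf i ∈ C i ∧ x i = Vtx.node i (lf i) := by
    intro i h1 h2
    obtain ⟨hx, hC, -⟩ := hf i h1 h2
    rw [jeq i h1 h2] at hx hC
    exact ⟨hC, hx⟩
  -- No two chosen literals conflict.
  have noconf : ∀ i m, 1 ≤ i → i < m → m ≤ k → lf i ≠ negLit (lf m) := by
    intro i m h1 h2 h3 hne
    obtain ⟨hCi, hxi⟩ := claim1 i h1 (by omega)
    obtain ⟨hCm, hxm⟩ := claim1 m (by omega) h3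
    by_cases hm : m = i + 1
    · have harc := (hirr i m h2 (by omega)).mpr hm
      rw [hxi, hxm] at harc
      obtain ⟨-, -, -, -, h5⟩ := harc
      rcases h5 with ⟨-, h5⟩ | ⟨h5, -⟩
      · exact h5 hne
      · omega
    · have harc : arc k C (x i) (x m) := by
        rw [hxi, hxm]
        exact ⟨h1, h3, hCi, hCm, Or.inr ⟨by omega, hne⟩⟩
      have := (hirr i m h2 (by omega)).mp harc
      omega
  refine ⟨lf, claim1, ?_⟩
  refine ⟨fun v => if h : ∃ m, 1 ≤ m ∧ m ≤ k ∧ (lf m).1 = v then (lf h.choose).2 else true, ?_⟩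
  intro i h1 h2
  have hex : ∃ m, 1 ≤ m ∧ m ≤ k ∧ (lf m).1 = (lf i).1 := ⟨i, h1, h2, rfl⟩
  simp only [dif_pos hex]
  obtain ⟨hm1, hm2, hm3⟩ := hex.choose_spec
  set m := hex.choose with hmdef
  by_contra hne2
  rcases lt_trichotomy m i with hlt | heq | hlt
  · have hb : (lf m).2 = !(lf i).2 := by
      revert hne2; cases (lf m).2 <;> cases (lf i).2 <;> decide
    exact noconf m i hm1 hlt h2 (Prod.ext_iff.mpr ⟨hm3, hb⟩)
  · rw [heq] at hne2; exact hne2 rfl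
  · have hb : (lf i).2 = !(lf m).2 := by
      revert hne2; cases (lf m).2 <;> cases (lf i).2 <;> decide
    exact noconf i m h1 hlt hm2 (Prod.ext_iff.mpr ⟨hm3.symm, hb⟩)
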